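/- Let p be an odd prime, and define π from the vertex set of Π_p to the projective line ℙ¹(𝔽_p) by sending the class [λ,μ] to the projective point with homogeneous coordinates (λ : μ) (this is well defined since (λ,μ) ≠ (0,0) and (λ,μ), (−λ,−μ) determine the same projective point). Then: (i) every fiber of π has exactly (p−1)/2 elements, so π is surjective onto the p+1 points of ℙ¹(𝔽_p); (ii) if v and w are adjacent in Π_p then π(v) ≠ π(w); and (iii) for every vertex v of Π_p and every point c ∈ ℙ¹(𝔽_p) with c ≠ π(v), there is exactly one neighbour w of v in Π_p with π(w) = c. In other words, π exhibits Π_p as an ((p−1)/2)-fold covering of the complete graph K_{p+1} on ℙ¹(𝔽_p). -/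

import Mathlib

/-- Pairs `(λ, μ) ∈ (ℤ/N)²` with `gcd(λ, μ, N) = 1`. -/
abbrev PlatonicPair (N : ℕ) : Type :=
  {x : ZMod N × ZMod N // Nat.gcd (Nat.gcd x.1.val x.2.val) N = 1}

/-- Identify `(λ,μ)` with `(-λ,-μ)`. -/
instance platonicSetoid (N : ℕ) : Setoid (PlatonicPair N) where
  r x y := y.val = x.val ∨ y.val = -x.val
  iseqv := by
    refine ⟨fun _ => Or.inl rfl, ?_, ?_⟩
    · rintro x y (h | h)
      · exact Or.inl h.symm
      · right; rw [h, neg_neg]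
    · rintro x y z (h1 | h1) (h2 | h2)
      · exact Or.inl (h2.trans h1)
      · right; rw [h2, h1]
      · right; rw [h2, h1]
      · left; rw [h2, h1, neg_neg]

/-- Vertices of the Platonic graph: classes `[λ,μ] = {(λ,μ), (-λ,-μ)}`. -/
abbrev PlatonicVertex (N : ℕ) : Type := Quotient (platonicSetoid N)

/-- The Platonic graph `Π_N`: distinct classes `[λ,μ]`, `[ν,ω]` are adjacent
iff `λω - μν = ±1` in `ℤ/N`. -/
def Platonic (N : ℕ) : SimpleGraph (PlatonicVertex N) where
  Adj a b := a ≠ b ∧ ∃ x y : PlatonicPair N, ⟦x⟧ = a ∧ ⟦y⟧ = b ∧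
    (x.val.1 * y.val.2 - x.val.2 * y.val.1 = 1 ∨
     x.val.1 * y.val.2 - x.val.2 * y.val.1 = -1)
  symm := ⟨by
    rintro a b ⟨hne, x, y, hx, hy, hdet⟩
    refine ⟨hne.symm, y, x, hy, hx, ?_⟩
    rcases hdet with h | h
    · right; linear_combination -h
    · left; linear_combination -h⟩
  loopless := ⟨fun a h => h.1 rfl⟩

instance platonicDecRel (N : ℕ) :
    DecidableRel (α := PlatonicPair N) (· ≈ ·) := fun x y =>
  inferInstanceAs (Decidable (y.val = x.val ∨ y.val = -x.val))

instance (N : ℕ) : DecidableEq (PlatonicVertex N) :=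
  @Quotient.decidableEq _ _ (platonicDecRel N)

instance (N : ℕ) [NeZero N] : Fintype (PlatonicVertex N) :=
  Quotient.fintype _

instance platonicAdjDec (N : ℕ) [NeZero N] : DecidableRel (Platonic N).Adj := fun a b =>
  inferInstanceAs (Decidable (a ≠ b ∧ ∃ x y : PlatonicPair N, ⟦x⟧ = a ∧ ⟦y⟧ = b ∧
    (x.val.1 * y.val.2 - x.val.2 * y.val.1 = 1 ∨
     x.val.1 * y.val.2 - x.val.2 * y.val.1 = -1)))

/-- The class of `(λ,μ)` has nonvanishing second coordinate. -/
def secondNZ (N : ℕ) (v : PlatonicVertex N) : Prop :=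
  ∀ x : PlatonicPair N, ⟦x⟧ = v → x.val.2 ≠ 0

instance (N : ℕ) [NeZero N] : DecidablePred (secondNZ N) := fun _ =>
  Fintype.decidableForallFintype

/-- The modified Platonic graph `Π_p'`: induced subgraph of `Π_p` on the classes
`[λ,μ]` with `μ ≠ 0`. -/
def ModPlatonic (N : ℕ) : SimpleGraph {v : PlatonicVertex N | secondNZ N v} :=
  SimpleGraph.induce {v : PlatonicVertex N | secondNZ N v} (Platonic N)

instance (N : ℕ) [NeZero N] : DecidableRel (ModPlatonic N).Adj := fun a b =>
  inferInstanceAs (Decidable ((Platonic N).Adj a b))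

/-- The vector `(λ, μ)` associated to a Platonic pair is nonzero (for `p` prime). -/
theorem platonicPair_vec_ne_zero (p : ℕ) [hp : Fact p.Prime] (x : PlatonicPair p) :
    (![x.val.1, x.val.2] : Fin 2 → ZMod p) ≠ 0 := by
  intro h0
  have h1 : x.val.1 = 0 := by simpa using congrFun h0 0
  have h2 : x.val.2 = 0 := by simpa using congrFun h0 1
  have hx := x.property
  rw [h1, h2] at hx
  simp [ZMod.val_zero] at hx
  exact hp.out.one_lt.ne' hx

/-- The covering map `π` from the vertices of `Π_p` to the projective line
`ℙ¹(𝔽_p)`, sending the class `[λ,μ]` to the projective point `(λ : μ)`. -/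
def projPi (p : ℕ) [Fact p.Prime] :
    PlatonicVertex p → Projectivization (ZMod p) (Fin 2 → ZMod p) :=
  Quotient.lift
    (fun x => Projectivization.mk (ZMod p) ![x.val.1, x.val.2]
      (platonicPair_vec_ne_zero p x))
    (by
      intro x y hxy
      rw [Projectivization.mk_eq_mk_iff]
      rcases hxy with h | h
      · exact ⟨1, by rw [h]; simp⟩
      · refine ⟨-1, ?_⟩
        have h1 : y.val.1 = -x.val.1 := by rw [h]; simp
        have h2 : y.val.2 = -x.val.2 := by rw [h]; simp
        funext k
        fin_cases k <;> simp [h1, h2, Units.smul_def])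



section Helpers

variable (p : ℕ) [hp : Fact p.Prime]

theorem pp_not_both_zero (x : PlatonicPair p) : ¬(x.val.1 = 0 ∧ x.val.2 = 0) := by
  rintro ⟨h1, h2⟩
  apply platonicPair_vec_ne_zero p x
  funext k; fin_cases k <;> simp [h1, h2]

theorem gcd_cond {a b : ZMod p} (h : ¬(a = 0 ∧ b = 0)) :
    Nat.gcd (Nat.gcd a.val b.val) p = 1 := by
  rw [Nat.gcd_comm]
  refine (Nat.Prime.coprime_iff_not_dvd hp.out).mpr ?_
  intro hdvd
  have hap : (p : ℕ) ∣ a.val := hdvd.trans (Nat.gcd_dvd_left _ _)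
  have hbp : (p : ℕ) ∣ b.val := hdvd.trans (Nat.gcd_dvd_right _ _)
  have ha : a = 0 := (ZMod.val_eq_zero a).mp (Nat.eq_zero_of_dvd_of_lt hap (ZMod.val_lt a))
  have hb : b = 0 := (ZMod.val_eq_zero b).mp (Nat.eq_zero_of_dvd_of_lt hbp (ZMod.val_lt b))
  exact h ⟨ha, hb⟩

/-- Make a PlatonicPair from a nonzero pair. -/
def mkP (a b : ZMod p) (h : ¬(a = 0 ∧ b = 0)) : PlatonicPair p :=
  ⟨(a, b), gcd_cond p h⟩

theorem projPi_mk (x : PlatonicPair p) :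
    projPi p ⟦x⟧ = Projectivization.mk (ZMod p) ![x.val.1, x.val.2]
      (platonicPair_vec_ne_zero p x) := rfl

theorem vert_eq_iff (x y : PlatonicPair p) :
    (⟦x⟧ : PlatonicVertex p) = ⟦y⟧ ↔ (y.val = x.val ∨ y.val = -x.val) :=
  ⟨fun h => Quotient.exact h, fun h => Quotient.sound h⟩

theorem projPi_eq_iff (x y : PlatonicPair p) :
    projPi p ⟦x⟧ = projPi p ⟦y⟧ ↔
      ∃ t : ZMod p, t ≠ 0 ∧ x.val.1 = t * y.val.1 ∧ x.val.2 = t * y.val.2 := by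
  rw [projPi_mk, projPi_mk, Projectivization.mk_eq_mk_iff]
  constructor
  · rintro ⟨a, ha⟩
    refine ⟨(a : ZMod p), a.ne_zero, ?_, ?_⟩
    · have := congrFun ha 0; simpa [Units.smul_def] using this.symm
    · have := congrFun ha 1; simpa [Units.smul_def] using this.symm
  · rintro ⟨t, ht, h1, h2⟩
    refine ⟨Units.mk0 t ht, ?_⟩
    funext k; fin_cases k <;> simp [Units.smul_def, h1, h2]

theorem proportional_of_det_zero (x y : PlatonicPair p)
    (h : x.val.1 * y.val.2 - x.val.2 * y.val.1 = 0) :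
    projPi p ⟦x⟧ = projPi p ⟦y⟧ := by
  rw [projPi_eq_iff]
  have hx := pp_not_both_zero p x
  have hy := pp_not_both_zero p y
  by_cases hy1 : y.val.1 = 0
  · have hy2 : y.val.2 ≠ 0 := fun h2 => hy ⟨hy1, h2⟩
    have hx1 : x.val.1 = 0 := by
      have : x.val.1 * y.val.2 = 0 := by rw [hy1] at h; linear_combination h
      rcases mul_eq_zero.mp this with h' | h'
      · exact h'
      · exact absurd h' hy2
    have hx2 : x.val.2 ≠ 0 := fun h2 => hx ⟨hx1, h2⟩
    refine ⟨x.val.2 * (y.val.2)⁻¹, by simp [hx2, hy2], ?_, ?_⟩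
    · rw [hx1, hy1]; ring
    · field_simp
  · refine ⟨x.val.1 * (y.val.1)⁻¹, ?_, ?_, ?_⟩
    · intro h0
      rcases mul_eq_zero.mp h0 with h' | h'
      · -- x.val.1 = 0, then x.val.2 * y.val.1 = 0, so x.val.2 = 0, contradiction
        have : x.val.2 * y.val.1 = 0 := by rw [h'] at h; linear_combination -h
        rcases mul_eq_zero.mp this with h'' | h''
        · exact hx ⟨h', h''⟩
        · exact hy1 h''
      · exact hy1 (inv_eq_zero.mp h')
    · field_simp
    · -- x.val.2 = x.val.1 * y.val.1⁻¹ * y.val.2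
      field_simp
      linear_combination -h

theorem negP_aux (x : PlatonicPair p) : ¬((-x.val.1) = 0 ∧ (-x.val.2) = 0) := by
  rintro ⟨h1, h2⟩
  exact pp_not_both_zero p x ⟨neg_eq_zero.mp h1, neg_eq_zero.mp h2⟩

/-- Negation of a pair. -/
def negP (x : PlatonicPair p) : PlatonicPair p :=
  mkP p (-x.val.1) (-x.val.2) (negP_aux p x)

theorem negP_val (x : PlatonicPair p) : (negP p x).val = -x.val := by
  simp [negP, mkP, Prod.ext_iff]

theorem ne_negP (hodd : Odd p) (x : PlatonicPair p) : x ≠ negP p x := by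
  intro h
  have h2 : (2 : ZMod p) ≠ 0 := by
    intro h2
    have hdvd : (p : ℕ) ∣ 2 :=
      (ZMod.natCast_eq_zero_iff 2 p).mp (by exact_mod_cast h2)
    have := Nat.le_of_dvd (by norm_num) hdvd
    have := hp.out.two_le
    have := Nat.odd_iff.mp hodd
    omega
  have hv : x.val = -x.val := (congrArg Subtype.val h).trans (negP_val p x)
  have h1 : x.val.1 = 0 := by
    have := congrArg Prod.fst hv
    simp only [Prod.fst_neg] at this
    have h2a : (2 : ZMod p) * x.val.1 = 0 := by linear_combination this
    rcases mul_eq_zero.mp h2a with h' | h'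
    · exact absurd h' h2
    · exact h'
  have h2' : x.val.2 = 0 := by
    have := congrArg Prod.snd hv
    simp only [Prod.snd_neg] at this
    have h2a : (2 : ZMod p) * x.val.2 = 0 := by linear_combination this
    rcases mul_eq_zero.mp h2a with h' | h'
    · exact absurd h' h2
    · exact h'
  exact pp_not_both_zero p x ⟨h1, h2'⟩

theorem projPi_surj : Function.Surjective (projPi p) := by
  intro c
  induction c using Projectivization.ind with
  | h v hv =>
    have h1 : ¬(v 0 = 0 ∧ v 1 = 0) := by
      rintro ⟨h0, h1⟩
      apply hv; funext k; fin_cases k <;> simpa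
    refine ⟨⟦mkP p (v 0) (v 1) h1⟧, ?_⟩
    rw [projPi_mk, Projectivization.mk_eq_mk_iff]
    refine ⟨1, ?_⟩
    funext k; fin_cases k <;> simp [mkP]

theorem fiber_card (hodd : Odd p) (c : Projectivization (ZMod p) (Fin 2 → ZMod p)) :
    {v : PlatonicVertex p | projPi p v = c}.ncard = (p - 1) / 2 := by
  classical
  obtain ⟨v₀, hv₀⟩ := projPi_surj p c
  obtain ⟨x₀, hx₀⟩ := Quotient.exists_rep v₀
  have hx₀c : projPi p ⟦x₀⟧ = c := by rw [hx₀]; exact hv₀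
  set S : Finset (PlatonicPair p) :=
    Finset.univ.filter (fun x => projPi p ⟦x⟧ = c) with hS
  set T : Finset (PlatonicVertex p) :=
    Finset.univ.filter (fun v => projPi p v = c) with hT
  -- card S = p - 1
  have hScard : S.card = p - 1 := by
    have hb : S.card = Fintype.card (ZMod p)ˣ := by
      symm
      rw [← Finset.card_univ]
      apply Finset.card_bij (i := fun (t : (ZMod p)ˣ) _ =>
        mkP p (t * x₀.val.1) (t * x₀.val.2) (by
          rintro ⟨h1, h2⟩
          rcases mul_eq_zero.mp h1 with h' | h'
          · exact t.ne_zero h'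
          rcases mul_eq_zero.mp h2 with h'' | h''
          · exact t.ne_zero h''
          · exact pp_not_both_zero p x₀ ⟨h', h''⟩))
      · intro t _
        simp only [hS, Finset.mem_filter, Finset.mem_univ, true_and]
        rw [← hx₀c]
        rw [projPi_eq_iff]
        exact ⟨t, t.ne_zero, rfl, rfl⟩
      · intro t _ t' _ h
        have h1 : (t : ZMod p) * x₀.val.1 = t' * x₀.val.1 := congrArg (Prod.fst ∘ Subtype.val) h
        have h2 : (t : ZMod p) * x₀.val.2 = t' * x₀.val.2 := congrArg (Prod.snd ∘ Subtype.val) h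
        have hne := pp_not_both_zero p x₀
        ext
        by_cases hx1 : x₀.val.1 = 0
        · have hx2 : x₀.val.2 ≠ 0 := fun h' => hne ⟨hx1, h'⟩
          exact mul_right_cancel₀ hx2 h2
        · exact mul_right_cancel₀ hx1 h1
      · intro y hy
        simp only [hS, Finset.mem_filter, Finset.mem_univ, true_and] at hy
        rw [← hx₀c, projPi_eq_iff] at hy
        obtain ⟨t, ht, h1, h2⟩ := hy
        refine ⟨Units.mk0 t ht, Finset.mem_univ _, ?_⟩
        apply Subtype.ext
        apply Prod.ext <;> simp [mkP, h1, h2]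
    rw [hb, ZMod.card_units]
  -- card S = 2 * card T
  have hST : S.card = T.card * 2 := by
    rw [Finset.card_eq_sum_card_fiberwise (f := fun x => (⟦x⟧ : PlatonicVertex p)) (t := T)
      (fun x hx => by
        simp only [hS, Finset.mem_coe, Finset.mem_filter, Finset.mem_univ, true_and] at hx
        simp only [hT, Finset.mem_coe, Finset.mem_filter, Finset.mem_univ, true_and]
        exact hx)]
    rw [Finset.sum_congr rfl (g := fun _ => 2) ?_, Finset.sum_const, smul_eq_mul, mul_comm]
    intro v hv
    simp only [hT, Finset.mem_filter, Finset.mem_univ, true_and] at hv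
    obtain ⟨y, hy⟩ := Quotient.exists_rep v
    have hyS : y ∈ S := by
      simp only [hS, Finset.mem_filter, Finset.mem_univ, true_and]
      rw [hy]; exact hv
    have hnS : negP p y ∈ S := by
      simp only [hS, Finset.mem_filter, Finset.mem_univ, true_and]
      have : (⟦negP p y⟧ : PlatonicVertex p) = ⟦y⟧ :=
        (vert_eq_iff p y (negP p y)).mpr (Or.inr (negP_val p y)) |>.symm
      rw [this, hy]; exact hv
    have hfe : S.filter (fun x => (⟦x⟧ : PlatonicVertex p) = v) = {y, negP p y} := by
      ext x
      simp only [Finset.mem_filter, Finset.mem_insert, Finset.mem_singleton]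
      constructor
      · rintro ⟨-, hxv⟩
        rw [← hy] at hxv
        rcases (vert_eq_iff p x y).mp hxv with h | h
        · left; exact Subtype.ext h.symm
        · right; apply Subtype.ext; rw [negP_val, h, neg_neg]
      · rintro (rfl | rfl)
        · exact ⟨hyS, hy⟩
        · refine ⟨hnS, ?_⟩
          rw [← hy]
          exact ((vert_eq_iff p y (negP p y)).mpr (Or.inr (negP_val p y))).symm
    rw [hfe, Finset.card_pair (ne_negP p hodd y)]
  have hset : {v : PlatonicVertex p | projPi p v = c} = ↑T := by
    ext v; simp [hT]
  rw [hset, Set.ncard_coe_finset]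
  omega

theorem card_P1 : Nat.card (Projectivization (ZMod p) (Fin 2 → ZMod p)) = p + 1 := by
  have hb : Function.Bijective (fun o : Option (ZMod p) =>
      Option.elim o
        (Projectivization.mk (ZMod p) ![1, 0] (by
          intro h; simpa using congrFun h 0))
        (fun a => Projectivization.mk (ZMod p) ![a, 1] (by
          intro h; simpa using congrFun h 1))) := by
    constructor
    · intro o o' h
      match o, o' with
      | none, none => rfl
      | none, some a =>
        exfalso
        simp only [Option.elim] at h
        rw [Projectivization.mk_eq_mk_iff] at h
        obtain ⟨u, hu⟩ := h
        have := congrFun hu 1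
        simp [Units.smul_def] at this
      | some a, none =>
        exfalso
        simp only [Option.elim] at h
        rw [Projectivization.mk_eq_mk_iff] at h
        obtain ⟨u, hu⟩ := h
        have := congrFun hu 1
        simp [Units.smul_def] at this
      | some a, some a' =>
        simp only [Option.elim] at h
        rw [Projectivization.mk_eq_mk_iff] at h
        obtain ⟨u, hu⟩ := h
        have h1 := congrFun hu 1
        simp [Units.smul_def] at h1
        have h0 := congrFun hu 0
        simp [Units.smul_def, h1] at h0
        rw [h0]
    · intro c
      induction c using Projectivization.ind with
      | h v hv =>
        by_cases h1 : v 1 = 0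
        · have h0 : v 0 ≠ 0 := by
            intro h0; apply hv; funext k; fin_cases k <;> simp [h0, h1]
          refine ⟨none, ?_⟩
          simp only [Option.elim]
          rw [Projectivization.mk_eq_mk_iff]
          refine ⟨Units.mk0 (v 0)⁻¹ (inv_ne_zero h0), ?_⟩
          funext k; fin_cases k <;> simp [Units.smul_def, h1, inv_mul_cancel₀ h0]
        · refine ⟨some (v 0 * (v 1)⁻¹), ?_⟩
          simp only [Option.elim]
          rw [Projectivization.mk_eq_mk_iff]
          refine ⟨Units.mk0 (v 1)⁻¹ (inv_ne_zero h1), ?_⟩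
          funext k
          fin_cases k
          · simp only [Units.smul_def, Units.val_mk0, Pi.smul_apply, smul_eq_mul,
              Fin.zero_eta, Fin.isValue, Matrix.cons_val_zero, Matrix.cons_val_one,
              Matrix.head_cons]
            ring
          · simp [Units.smul_def, inv_mul_cancel₀ h1]
  rw [← Nat.card_eq_of_bijective _ hb, Nat.card_eq_fintype_card, Fintype.card_option,
    ZMod.card]

theorem det_pm_one_of_adj {v w : PlatonicVertex p} (h : (Platonic p).Adj v w)
    (x y : PlatonicPair p) (hx : (⟦x⟧ : PlatonicVertex p) = v)
    (hy : (⟦y⟧ : PlatonicVertex p) = w) :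
    x.val.1 * y.val.2 - x.val.2 * y.val.1 = 1 ∨
    x.val.1 * y.val.2 - x.val.2 * y.val.1 = -1 := by
  obtain ⟨-, x', y', hx', hy', hdet⟩ := h
  have hxe : x.val = x'.val ∨ x.val = -x'.val :=
    (vert_eq_iff p x' x).mp (hx'.trans hx.symm)
  have hye : y.val = y'.val ∨ y.val = -y'.val :=
    (vert_eq_iff p y' y).mp (hy'.trans hy.symm)
  have hx1 : x.val.1 = x'.val.1 ∧ x.val.2 = x'.val.2 ∨
      x.val.1 = -x'.val.1 ∧ x.val.2 = -x'.val.2 := by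
    rcases hxe with h | h
    · exact Or.inl ⟨congrArg Prod.fst h, congrArg Prod.snd h⟩
    · right
      constructor
      · have := congrArg Prod.fst h; simpa using this
      · have := congrArg Prod.snd h; simpa using this
  have hy1 : y.val.1 = y'.val.1 ∧ y.val.2 = y'.val.2 ∨
      y.val.1 = -y'.val.1 ∧ y.val.2 = -y'.val.2 := by
    rcases hye with h | h
    · exact Or.inl ⟨congrArg Prod.fst h, congrArg Prod.snd h⟩
    · right
      constructor
      · have := congrArg Prod.fst h; simpa using this
      · have := congrArg Prod.snd h; simpa using this
  rcases hx1 with ⟨ha, hb⟩ | ⟨ha, hb⟩ <;> rcases hy1 with ⟨hc, hd⟩ | ⟨hc, hd⟩ <;>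
    rw [ha, hb, hc, hd] <;>
    rcases hdet with hd' | hd' <;>
    first
      | (left; linear_combination hd')
      | (left; linear_combination -hd')
      | (right; linear_combination hd')
      | (right; linear_combination -hd')

end Helpers

/-- `π` exhibits `Π_p` as an `((p-1)/2)`-fold covering of the complete graph on the
`p+1` points of `ℙ¹(𝔽_p)`: (i) every fiber of `π` has exactly `(p-1)/2` elements, so
`π` is surjective onto the `p+1` points of `ℙ¹(𝔽_p)`; (ii) adjacent vertices of `Π_p`
have distinct images; (iii) for every vertex `v` and every point `c ≠ π(v)` there is
exactly one neighbour `w` of `v` with `π(w) = c`. -/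
theorem platonic_covering_of_complete_graph (p : ℕ) [hp : Fact p.Prime]
    (hodd : Odd p) :
    (∀ c : Projectivization (ZMod p) (Fin 2 → ZMod p),
      {v : PlatonicVertex p | projPi p v = c}.ncard = (p - 1) / 2) ∧
    Function.Surjective (projPi p) ∧
    Nat.card (Projectivization (ZMod p) (Fin 2 → ZMod p)) = p + 1 ∧
    (∀ v w : PlatonicVertex p, (Platonic p).Adj v w → projPi p v ≠ projPi p w) ∧
    (∀ (v : PlatonicVertex p) (c : Projectivization (ZMod p) (Fin 2 → ZMod p)),
      c ≠ projPi p v →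
      ∃! w : PlatonicVertex p, (Platonic p).Adj v w ∧ projPi p w = c) := by
  have hsurj := projPi_surj p
  refine ⟨fiber_card p hodd, hsurj, card_P1 p, ?_, ?_⟩
  · intro v w hadj heq
    obtain ⟨x, hx⟩ := Quotient.exists_rep v
    obtain ⟨y, hy⟩ := Quotient.exists_rep w
    have hdet := det_pm_one_of_adj p hadj x y hx hy
    have heq' : projPi p ⟦x⟧ = projPi p ⟦y⟧ := by rw [hx, hy]; exact heq
    rw [projPi_eq_iff] at heq'
    obtain ⟨t, ht, h1, h2⟩ := heq'
    have h0 : x.val.1 * y.val.2 - x.val.2 * y.val.1 = 0 := by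
      rw [h1, h2]; ring
    rw [h0] at hdet
    rcases hdet with h | h
    · exact one_ne_zero h.symm
    · exact one_ne_zero (neg_eq_zero.mp h.symm)
  · intro v c hc
    obtain ⟨x, hx⟩ := Quotient.exists_rep v
    obtain ⟨v₀, hv₀⟩ := hsurj c
    obtain ⟨u, hu⟩ := Quotient.exists_rep v₀
    have huc : projPi p ⟦u⟧ = c := by rw [hu]; exact hv₀
    set d := x.val.1 * u.val.2 - x.val.2 * u.val.1 with hd_def
    have hd : d ≠ 0 := by
      intro h0
      apply hc
      rw [← huc, ← hx]
      exact (proportional_of_det_zero p x u h0).symm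
    have hw0nz : ¬(d⁻¹ * u.val.1 = 0 ∧ d⁻¹ * u.val.2 = 0) := by
      rintro ⟨h1, h2⟩
      have hi : d⁻¹ ≠ 0 := inv_ne_zero hd
      refine pp_not_both_zero p u ⟨?_, ?_⟩
      · rcases mul_eq_zero.mp h1 with h | h
        · exact absurd h hi
        · exact h
      · rcases mul_eq_zero.mp h2 with h | h
        · exact absurd h hi
        · exact h
    set w₀ : PlatonicPair p := mkP p (d⁻¹ * u.val.1) (d⁻¹ * u.val.2) hw0nz with hw₀def
    have hw₀val1 : w₀.val.1 = d⁻¹ * u.val.1 := rfl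
    have hw₀val2 : w₀.val.2 = d⁻¹ * u.val.2 := rfl
    have hdet1 : x.val.1 * w₀.val.2 - x.val.2 * w₀.val.1 = 1 := by
      rw [hw₀val1, hw₀val2]
      have he : x.val.1 * (d⁻¹ * u.val.2) - x.val.2 * (d⁻¹ * u.val.1) = d⁻¹ * d := by
        rw [hd_def]; ring
      rw [he, inv_mul_cancel₀ hd]
    have hw₀c : projPi p ⟦w₀⟧ = c := by
      rw [← huc, projPi_eq_iff]
      exact ⟨d⁻¹, inv_ne_zero hd, hw₀val1, hw₀val2⟩
    have hne : v ≠ ⟦w₀⟧ := by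
      intro h
      exact hc (by rw [h, hw₀c])
    have hadj : (Platonic p).Adj v ⟦w₀⟧ := ⟨hne, x, w₀, hx, rfl, Or.inl hdet1⟩
    refine ⟨⟦w₀⟧, ⟨hadj, hw₀c⟩, ?_⟩
    rintro w' ⟨hadj', hw'c⟩
    obtain ⟨y, hy⟩ := Quotient.exists_rep w'
    have hdet' := det_pm_one_of_adj p hadj' x y hx hy
    have hyu : projPi p ⟦y⟧ = projPi p ⟦u⟧ := by rw [hy, huc]; exact hw'c
    rw [projPi_eq_iff] at hyu
    obtain ⟨t, ht, h1, h2⟩ := hyu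
    have htd : x.val.1 * y.val.2 - x.val.2 * y.val.1 = t * d := by
      rw [h1, h2, hd_def]; ring
    rw [← hy]
    rcases hdet' with h | h
    · have ht' : t = d⁻¹ := eq_inv_of_mul_eq_one_right (by linear_combination htd.symm.trans h)
      have hyw : y = w₀ := by
        apply Subtype.ext
        apply Prod.ext
        · rw [h1, ht', hw₀val1]
        · rw [h2, ht', hw₀val2]
      rw [hyw]
    · have hmt : (-t) * d = 1 := by linear_combination -(htd.symm.trans h)
      have hnt : -t = d⁻¹ := eq_inv_of_mul_eq_one_right (by linear_combination hmt)
      have ht' : t = -d⁻¹ := by linear_combination -hnt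
      refine (vert_eq_iff p y w₀).mpr (Or.inr ?_)
      rw [Prod.ext_iff]
      constructor
      · simp only [Prod.fst_neg]
        rw [hw₀val1, h1, ht']; ring
      · simp only [Prod.snd_neg]
        rw [hw₀val2, h2, ht']; ring
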